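/- Let σ be the Weierstrass sigma function of a lattice Ω = ℤω₁ + ℤω₂, with quasi-period map η : Ω → ℂ satisfying σ(z+ω) = ε(ω)σ(z)exp(η(ω)(z+ω/2)). If Re(ωη(ω)) ≤ 0 for all ω ∈ Ω, then σ has order of growth at most 1; since σ is a nonzero entire function of order 2 (it vanishes on the lattice Ω), there exists ω ∈ Ω with Re(ω η(ω)) > 0. -/

import Mathlib

open Complex

lemma exp_affine_const {p q c : ℂ} {s : Set ℂ} (hs : IsOpen s) (hne : s.Nonempty)
    (h : ∀ z ∈ s, Complex.exp (p * z + q) = c) : p = 0 := by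
  obtain ⟨z₀, hz₀⟩ := hne
  have hd : HasDerivAt (fun z => Complex.exp (p * z + q)) (Complex.exp (p * z₀ + q) * p) z₀ := by
    have h1 : HasDerivAt (fun z : ℂ => p * z + q) p z₀ := by
      simpa using ((hasDerivAt_id z₀).const_mul p).add_const q
    exact h1.cexp
  have hev : (fun z => Complex.exp (p * z + q)) =ᶠ[nhds z₀] fun _ => c :=
    Filter.eventually_of_mem (hs.mem_nhds hz₀) h
  have := hev.deriv_eq
  rw [hd.deriv, deriv_const] at this
  exact (mul_eq_zero.1 this).resolve_left (Complex.exp_ne_zero _)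

lemma eta_additive {σ η : ℂ → ℂ} (hσc : Continuous σ) (hσ0 : σ ≠ 0)
    {ω ω' : ℂ} {ε ε' ε'' : ℂ} (hε'' : ε'' ≠ 0)
    (h : ∀ z, σ (z + ω) = ε * σ z * Complex.exp (η ω * (z + ω / 2)))
    (h' : ∀ z, σ (z + ω') = ε' * σ z * Complex.exp (η ω' * (z + ω' / 2)))
    (h'' : ∀ z, σ (z + (ω + ω')) = ε'' * σ z * Complex.exp (η (ω + ω') * (z + (ω + ω') / 2))) :
    η (ω + ω') = η ω + η ω' := by
  set p : ℂ := η (ω + ω') - η ω - η ω' with hp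
  have hps : p = 0 := by
    apply exp_affine_const (p := p)
      (q := η (ω + ω') * ((ω + ω') / 2) - η ω' * (ω' / 2) - η ω * (ω' + ω / 2))
      (c := ε * ε' / ε'') (hσc.isOpen_preimage _ isOpen_compl_singleton)
    · obtain ⟨z₀, hz₀⟩ := Function.ne_iff.1 hσ0
      exact ⟨z₀, hz₀⟩
    · intro z hz
      have hz : σ z ≠ 0 := hz
      have e1 : σ (z + (ω + ω')) = ε * ε' * σ z *
          (Complex.exp (η ω' * (z + ω' / 2)) * Complex.exp (η ω * ((z + ω') + ω / 2))) := by
        have h2 := h (z + ω')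
        rw [show z + ω' + ω = z + (ω + ω') by ring] at h2
        rw [h2, h' z]; ring
      have e2 := h'' z
      rw [e1] at e2
      have hc : Complex.exp (η (ω + ω') * (z + (ω + ω') / 2)) * ε'' =
          Complex.exp (η ω' * (z + ω' / 2)) * Complex.exp (η ω * ((z + ω') + ω / 2)) * (ε * ε') := by
        apply mul_left_cancel₀ hz
        linear_combination -e2
      have h3 : Complex.exp (p * z + (η (ω + ω') * ((ω + ω') / 2) - η ω' * (ω' / 2) - η ω * (ω' + ω / 2))) *
          (Complex.exp (η ω' * (z + ω' / 2)) * Complex.exp (η ω * ((z + ω') + ω / 2))) =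
          Complex.exp (η (ω + ω') * (z + (ω + ω') / 2)) := by
        rw [← Complex.exp_add, ← Complex.exp_add]
        congr 1
        simp only [hp]; ring
      rw [eq_div_iff hε'']
      apply mul_right_cancel₀ (b := Complex.exp (η ω' * (z + ω' / 2)) * Complex.exp (η ω * (z + ω' + ω / 2)))
        (mul_ne_zero (Complex.exp_ne_zero _) (Complex.exp_ne_zero _))
      linear_combination ε'' * h3 + hc
  linear_combination hps

set_option maxHeartbeats 1000000 in
/-- For the Weierstrass sigma function of a lattice `Ω = ℤω₁ + ℤω₂`, with
quasi-periodicity `σ(z+ω) = ε(ω)σ(z)exp(η(ω)(z+ω/2))` (`ε(ω) = ±1`): if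
`Re(ωη(ω)) ≤ 0` for all `ω ∈ Ω` then `σ` has order of growth at most `1`;
since `σ` has order `2` (here: `σ` is entire but does not have order `≤ 1`),
there exists `ω ∈ Ω` with `Re(ωη(ω)) > 0`. -/
theorem exists_lattice_point_re_mul_eta_pos
    (ω₁ ω₂ : ℂ) (hindep : LinearIndependent ℝ ![ω₁, ω₂])
    (σ η : ℂ → ℂ) (hσ : Differentiable ℂ σ) (hσ0 : σ ≠ 0)
    (hzero : ∀ ω ∈ {z : ℂ | ∃ a b : ℤ, z = a * ω₁ + b * ω₂}, σ ω = 0)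
    (hqp : ∀ ω ∈ {z : ℂ | ∃ a b : ℤ, z = a * ω₁ + b * ω₂},
      ∃ ε : ℂ, (ε = 1 ∨ ε = -1) ∧
        ∀ z, σ (z + ω) = ε * σ z * Complex.exp (η ω * (z + ω / 2)))
    (horder : ¬ ∀ e : ℝ, 0 < e → ∃ C : ℝ,
      ∀ z : ℂ, ‖σ z‖ ≤ C * Real.exp (‖z‖ ^ (1 + e))) :
    ∃ ω ∈ {z : ℂ | ∃ a b : ℤ, z = a * ω₁ + b * ω₂}, 0 < (ω * η ω).re := by
  by_contra hcon
  push_neg at hcon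
  apply horder
  intro e he
  -- additivity of η on the lattice
  have hadd : ∀ u v : ℂ, (∃ a b : ℤ, u = a * ω₁ + b * ω₂) → (∃ a b : ℤ, v = a * ω₁ + b * ω₂) →
      η (u + v) = η u + η v := by
    intro u v hu hv
    obtain ⟨ε, _, hq⟩ := hqp u hu
    obtain ⟨ε', _, hq'⟩ := hqp v hv
    obtain ⟨ε'', hε'', hq''⟩ := hqp (u + v) (by
      obtain ⟨a, b, rfl⟩ := hu; obtain ⟨a', b', rfl⟩ := hv
      exact ⟨a + a', b + b', by push_cast; ring⟩)
    exact eta_additive hσ.continuous hσ0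
      (by rcases hε'' with h | h <;> simp [h]) hq hq' hq''
  have h0 : η 0 = 0 := by
    have h := hadd 0 0 ⟨0, 0, by simp⟩ ⟨0, 0, by simp⟩
    rw [add_zero] at h
    linear_combination -h
  have hsc : ∀ (n : ℤ) (w : ℂ), (∃ a b : ℤ, w = a * ω₁ + b * ω₂) →
      η ((n : ℂ) * w) = (n : ℂ) * η w := by
    intro n w hw
    have hmulmem : ∀ m : ℤ, ∃ a b : ℤ, (m : ℂ) * w = a * ω₁ + b * ω₂ := by
      intro m
      obtain ⟨a, b, rfl⟩ := hw
      exact ⟨m * a, m * b, by push_cast; ring⟩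
    induction n using Int.induction_on with
    | zero => push_cast; simpa using h0
    | succ i ih =>
      have h1 := hadd ((i : ℂ) * w) w (hmulmem i) hw
      push_cast at ih ⊢
      rw [show ((i : ℂ) + 1) * w = (i : ℂ) * w + w by ring, h1, ih]
      ring
    | pred i ih =>
      have h1 := hadd ((-(i : ℂ) - 1) * w) w (by
        have := hmulmem (-(i : ℤ) - 1); push_cast at this; convert this using 3 <;> ring) hw
      push_cast at ih ⊢
      rw [show (-(i : ℂ) - 1) * w + w = (-(i : ℂ)) * w by ring] at h1
      rw [show (-(i : ℂ)) * w = -((i : ℂ) * w) by ring] at h1 ih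
      linear_combination ih - h1
  have hlin : ∀ a b : ℤ, η ((a : ℂ) * ω₁ + (b : ℂ) * ω₂) = (a : ℂ) * η ω₁ + (b : ℂ) * η ω₂ := by
    intro a b
    have h1 := hadd ((a : ℂ) * ω₁) ((b : ℂ) * ω₂) ⟨a, 0, by push_cast; ring⟩ ⟨0, b, by push_cast; ring⟩
    rw [h1, hsc a ω₁ ⟨1, 0, by push_cast; ring⟩, hsc b ω₂ ⟨0, 1, by push_cast; ring⟩]
  -- coordinates via a basis
  have hcard : Fintype.card (Fin 2) = Module.finrank ℝ ℂ := by
    simp [Complex.finrank_real_complex]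
  set B : Module.Basis (Fin 2) ℝ ℂ := basisOfLinearIndependentOfCardEqFinrank hindep hcard with hBdef
  have hB : ⇑B = ![ω₁, ω₂] := coe_basisOfLinearIndependentOfCardEqFinrank hindep hcard
  set F : ℂ →L[ℝ] (Fin 2 → ℝ) := LinearMap.toContinuousLinearMap B.equivFun.toLinearMap with hFdef
  have hdec : ∀ z : ℂ, z = ((F z 0 : ℝ) : ℂ) * ω₁ + ((F z 1 : ℝ) : ℂ) * ω₂ := by
    intro z
    have h := B.sum_equivFun z
    rw [Fin.sum_univ_two, hB] at h
    have h' : F z = B.equivFun z := rfl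
    rw [h']
    conv_lhs => rw [← h]
    simp [Complex.real_smul]
  have hb : ∀ z : ℂ, ∀ i : Fin 2, |F z i| ≤ ‖F‖ * ‖z‖ := by
    intro z i
    calc |F z i| ≤ ‖F z‖ := norm_le_pi_norm (F z) i
      _ ≤ ‖F‖ * ‖z‖ := F.le_opNorm z
      _ = ‖F‖ * ‖z‖ := by rfl
  -- make the constants opaque
  obtain ⟨Cop, hCop, hcoord⟩ : ∃ C : ℝ, 0 ≤ C ∧
      ∀ z : ℂ, ∃ s t : ℝ, z = (s : ℂ) * ω₁ + (t : ℂ) * ω₂ ∧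
        |s| ≤ C * ‖z‖ ∧ |t| ≤ C * ‖z‖ :=
    ⟨‖F‖, norm_nonneg F, fun z => ⟨F z 0, F z 1, hdec z, hb z 0, hb z 1⟩⟩
  clear hdec hb hB hFdef F hBdef B hcard
  -- constants
  set D : ℝ := ‖ω₁‖ + ‖ω₂‖ with hDdef
  have hD : 0 ≤ D := by positivity
  set K : ℝ := max (‖η ω₁‖) (‖η ω₂‖) with hKdef
  have hK : 0 ≤ K := le_trans (norm_nonneg _) (le_max_left _ _)
  set K' : ℝ := 2 * D * K * (Cop + 1) with hK'def
  have hK' : 0 ≤ K' := by positivity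
  -- bound of σ on the compact ball
  obtain ⟨M, hM1, hM⟩ : ∃ M : ℝ, 1 ≤ M ∧ ∀ w : ℂ, ‖w‖ ≤ D → ‖σ w‖ ≤ M := by
    obtain ⟨M₀, hM₀⟩ := (isCompact_closedBall (0 : ℂ) D).exists_bound_of_continuousOn
      hσ.continuous.continuousOn
    refine ⟨max M₀ 1, le_max_right _ _, fun w hw => ?_⟩
    refine le_trans ?_ (le_max_left _ _)
    have := hM₀ w (by simpa [Metric.mem_closedBall, Complex.dist_eq] using hw)
    simpa using this
  have hM0 : (0 : ℝ) ≤ M := by linarith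
  -- floor estimates
  have hfl : ∀ u : ℝ, |(⌊u⌋ : ℝ)| ≤ |u| + 1 := by
    intro u
    rw [abs_le]
    constructor <;>
      [skip; skip] <;>
      linarith [Int.floor_le u, Int.lt_floor_add_one u, le_abs_self u, neg_abs_le u]
  have hfr : ∀ u : ℝ, |u - (⌊u⌋ : ℝ)| ≤ 1 := by
    intro u
    rw [abs_le]
    constructor <;>
      [skip; skip] <;>
      linarith [Int.floor_le u, Int.lt_floor_add_one u]
  -- the main estimate
  have hmain : ∀ z : ℂ, ‖σ z‖ ≤ M * Real.exp (K' * (‖z‖ + 1)) := by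
    intro z
    obtain ⟨s, t, hzdec, hsb, htb⟩ := hcoord z
    set ω : ℂ := ((⌊s⌋ : ℤ) : ℂ) * ω₁ + ((⌊t⌋ : ℤ) : ℂ) * ω₂ with hω
    have hωL : ∃ a b : ℤ, ω = (a : ℂ) * ω₁ + (b : ℂ) * ω₂ := ⟨⌊s⌋, ⌊t⌋, rfl⟩
    set z₀ : ℂ := z - ω with hz₀
    have hz₀e : z₀ = ((s - (⌊s⌋ : ℝ) : ℝ) : ℂ) * ω₁ + ((t - (⌊t⌋ : ℝ) : ℝ) : ℂ) * ω₂ := by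
      rw [hz₀, hω, hzdec]
      push_cast
      ring
    have hz₀n : ‖z₀‖ ≤ D := by
      rw [hz₀e, hDdef]
      calc ‖((s - (⌊s⌋ : ℝ) : ℝ) : ℂ) * ω₁ + ((t - (⌊t⌋ : ℝ) : ℝ) : ℂ) * ω₂‖
          ≤ ‖((s - (⌊s⌋ : ℝ) : ℝ) : ℂ) * ω₁‖ +
            ‖((t - (⌊t⌋ : ℝ) : ℝ) : ℂ) * ω₂‖ := norm_add_le _ _
        _ = |s - (⌊s⌋ : ℝ)| * ‖ω₁‖ + |t - (⌊t⌋ : ℝ)| * ‖ω₂‖ := by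
            rw [norm_mul, norm_mul, Complex.norm_real, Complex.norm_real, Real.norm_eq_abs, Real.norm_eq_abs]
        _ ≤ 1 * ‖ω₁‖ + 1 * ‖ω₂‖ := by gcongr; exacts [hfr s, hfr t]
        _ = ‖ω₁‖ + ‖ω₂‖ := by ring
    obtain ⟨ε, hε1, hq⟩ := hqp ω hωL
    have habs : ‖σ z‖ = ‖σ z₀‖ * Real.exp ((η ω * (z₀ + ω / 2)).re) := by
      have hqz := hq z₀
      rw [show z₀ + ω = z by rw [hz₀]; ring] at hqz
      rw [hqz, norm_mul, norm_mul, Complex.norm_exp]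
      rcases hε1 with h | h <;> simp [h]
    have hre : (η ω * (z₀ + ω / 2)).re ≤ K' * (‖z‖ + 1) := by
      have hsplit : η ω * (z₀ + ω / 2) = η ω * z₀ + (ω * η ω) / ((2 : ℝ) : ℂ) := by
        push_cast; ring
      rw [hsplit, Complex.add_re, Complex.div_ofReal_re]
      have hneg : (ω * η ω).re ≤ 0 := hcon ω hωL
      have h1 : (η ω * z₀).re ≤ ‖η ω‖ * D := by
        calc (η ω * z₀).re ≤ ‖η ω * z₀‖ := Complex.re_le_norm _
          _ = ‖η ω‖ * ‖z₀‖ := norm_mul _ _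
          _ ≤ ‖η ω‖ * D := mul_le_mul_of_nonneg_left hz₀n (norm_nonneg _)
      have h2 : ‖η ω‖ ≤ (|(⌊s⌋ : ℝ)| + |(⌊t⌋ : ℝ)|) * K := by
        rw [hω, hlin ⌊s⌋ ⌊t⌋]
        calc ‖((⌊s⌋ : ℤ) : ℂ) * η ω₁ + ((⌊t⌋ : ℤ) : ℂ) * η ω₂‖
            ≤ ‖((⌊s⌋ : ℤ) : ℂ) * η ω₁‖ + ‖((⌊t⌋ : ℤ) : ℂ) * η ω₂‖ :=
              norm_add_le _ _
          _ = |(⌊s⌋ : ℝ)| * ‖η ω₁‖ + |(⌊t⌋ : ℝ)| * ‖η ω₂‖ := by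
              rw [norm_mul, norm_mul, Complex.norm_intCast, Complex.norm_intCast]
          _ ≤ |(⌊s⌋ : ℝ)| * K + |(⌊t⌋ : ℝ)| * K := by
              gcongr
              exacts [le_max_left _ _, le_max_right _ _]
          _ = (|(⌊s⌋ : ℝ)| + |(⌊t⌋ : ℝ)|) * K := by ring
      have h3 : |(⌊s⌋ : ℝ)| ≤ Cop * ‖z‖ + 1 := le_trans (hfl s) (by linarith)
      have h4 : |(⌊t⌋ : ℝ)| ≤ Cop * ‖z‖ + 1 := le_trans (hfl t) (by linarith)
      have habsz : 0 ≤ ‖z‖ := norm_nonneg z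
      have haω : 0 ≤ ‖η ω‖ := norm_nonneg _
      have h5 : ‖η ω‖ * D ≤ K' * (‖z‖ + 1) := by
        have h6 : (|(⌊s⌋ : ℝ)| + |(⌊t⌋ : ℝ)|) ≤ 2 * (Cop + 1) * (‖z‖ + 1) := by
          nlinarith
        calc ‖η ω‖ * D ≤ ((|(⌊s⌋ : ℝ)| + |(⌊t⌋ : ℝ)|) * K) * D :=
              mul_le_mul_of_nonneg_right h2 hD
          _ ≤ (2 * (Cop + 1) * (‖z‖ + 1) * K) * D := by
              nlinarith [abs_nonneg ((⌊s⌋ : ℝ)), abs_nonneg ((⌊t⌋ : ℝ))]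
          _ = K' * (‖z‖ + 1) := by rw [hK'def]; ring
      linarith
    rw [habs]
    exact mul_le_mul (hM z₀ hz₀n) (Real.exp_le_exp.2 hre) (Real.exp_pos _).le hM0
  -- conclude the order bound
  set R : ℝ := max ((2 * K') ^ (1 / e)) 1 with hRdef
  have hR1 : (1 : ℝ) ≤ R := le_max_right _ _
  have hR0 : 0 ≤ R := by linarith
  refine ⟨M * Real.exp (K' * (R + 1)), fun z => ?_⟩
  have h1 := hmain z
  set r : ℝ := ‖z‖ with hr
  have hr0 : 0 ≤ r := norm_nonneg z
  have hexp1 : (1 : ℝ) ≤ Real.exp (r ^ (1 + e)) :=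
    Real.one_le_exp (Real.rpow_nonneg hr0 _)
  rcases le_total r R with hle | hle
  · calc ‖σ z‖ ≤ M * Real.exp (K' * (r + 1)) := h1
      _ ≤ M * Real.exp (K' * (R + 1)) :=
          mul_le_mul_of_nonneg_left (Real.exp_le_exp.2 (by nlinarith)) hM0
      _ = M * Real.exp (K' * (R + 1)) * 1 := by ring
      _ ≤ M * Real.exp (K' * (R + 1)) * Real.exp (r ^ (1 + e)) :=
          mul_le_mul_of_nonneg_left hexp1 (by positivity)
  · have hr1 : (1 : ℝ) ≤ r := le_trans hR1 hle
    have hrpow : 2 * K' ≤ r ^ e := by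
      have h2 : (2 * K') ^ (1 / e) ≤ r := le_trans (le_max_left _ _) hle
      have h3 := Real.rpow_le_rpow (Real.rpow_nonneg (by linarith) _) h2 he.le
      rwa [← Real.rpow_mul (by linarith), one_div, inv_mul_cancel₀ he.ne', Real.rpow_one] at h3
    have hK'r : K' * (r + 1) ≤ r ^ (1 + e) := by
      have h4 : r ^ (1 + e) = r * r ^ e := by
        rw [Real.rpow_add (by linarith), Real.rpow_one]
      rw [h4]
      nlinarith [Real.rpow_nonneg hr0 e]
    calc ‖σ z‖ ≤ M * Real.exp (K' * (r + 1)) := h1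
      _ ≤ M * Real.exp (r ^ (1 + e)) :=
          mul_le_mul_of_nonneg_left (Real.exp_le_exp.2 hK'r) hM0
      _ ≤ M * Real.exp (K' * (R + 1)) * Real.exp (r ^ (1 + e)) := by
          have h5 : (1 : ℝ) ≤ Real.exp (K' * (R + 1)) := Real.one_le_exp (by positivity)
          exact mul_le_mul_of_nonneg_right (le_mul_of_one_le_right hM0 h5) (Real.exp_pos _).le
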